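/- For any natural number r ≤ dim H, the minimum over density operators ρ with rank(ρ) ≤ r of the perfect-distinguishability ratio μ_{ρ,M}(1) equals the minimum over the same domain of the distinguishability ratio μ̂_{ρ,M} = inf_{σ≠ρ} ‖ρ−σ‖_M/‖ρ−σ‖₁, and both equal the minimum of μ_{ρ,M}(1) over ρ with rank(ρ) ≤ min{r, (dim H)/2}. -/

import Mathlib

open Matrix
open scoped ComplexOrder Pointwise

namespace QSVQDH

variable {d : ℕ}

/-- Schatten 1-norm (trace norm). -/
noncomputable def trNorm (A : Matrix (Fin d) (Fin d) ℂ) : ℝ :=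
  ((Matrix.posSemidef_conjTranspose_mul_self A).isHermitian.eigenvectorUnitary.1 *
      diagonal ((fun x : ℝ => (x : ℂ)) ∘ (fun x : ℝ => √x) ∘ (Matrix.posSemidef_conjTranspose_mul_self A).isHermitian.eigenvalues) *
      (star (Matrix.posSemidef_conjTranspose_mul_self A).isHermitian.eigenvectorUnitary :
        Matrix (Fin d) (Fin d) ℂ)).trace.re

/-- Schatten 2-norm (Hilbert–Schmidt norm). -/
noncomputable def hsNorm (A : Matrix (Fin d) (Fin d) ℂ) : ℝ :=
  Real.sqrt ((Aᴴ * A).trace.re)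

/-- Operator norm. -/
noncomputable def opNorm (A : Matrix (Fin d) (Fin d) ℂ) : ℝ :=
  ‖Matrix.toEuclideanCLM (𝕜 := ℂ) A‖

/-- Density operator: positive semidefinite with unit trace. -/
def IsDensity (ρ : Matrix (Fin d) (Fin d) ℂ) : Prop := ρ.PosSemidef ∧ ρ.trace = 1

/-- POVM element: 0 ≤ M ≤ I. -/
def IsPOVMElem (M : Matrix (Fin d) (Fin d) ℂ) : Prop := M.PosSemidef ∧ (1 - M).PosSemidef

/-- A measurement class of binary effects: contains 0, consists of POVM elements,
is convex, and is closed under M ↦ I − M. -/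
def IsMClass (Mset : Set (Matrix (Fin d) (Fin d) ℂ)) : Prop :=
  0 ∈ Mset ∧ (∀ M ∈ Mset, IsPOVMElem M) ∧ Convex ℝ Mset ∧ (∀ M ∈ Mset, 1 - M ∈ Mset)

/-- The M-seminorm ‖Δ‖_M = sup_{M ∈ Mset} (2 tr(MΔ) − tr Δ). -/
noncomputable def Mnorm (Mset : Set (Matrix (Fin d) (Fin d) ℂ))
    (Δ : Matrix (Fin d) (Fin d) ℂ) : ℝ :=
  sSup ((fun M => 2 * (M * Δ).trace.re - Δ.trace.re) '' Mset)

/-- The ε-distinguishability ratio μ_{ρ,M}(ε). -/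
noncomputable def mu (Mset : Set (Matrix (Fin d) (Fin d) ℂ))
    (ρ : Matrix (Fin d) (Fin d) ℂ) (ε : ℝ) : ℝ :=
  (1 / (2 * ε)) *
    sInf ((fun σ => Mnorm Mset (ρ - σ)) '' {σ | IsDensity σ ∧ 2 * ε ≤ trNorm (ρ - σ)})

/-- The ε-visibility γ_{V,M}(ε), where the subspace V is given by its
orthogonal projector P. -/
noncomputable def gamma (Mset : Set (Matrix (Fin d) (Fin d) ℂ))
    (P : Matrix (Fin d) (Fin d) ℂ) (ε : ℝ) : ℝ :=
  (1 / ε) * sSup ((fun Ω =>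
      sInf ((fun p : Matrix (Fin d) (Fin d) ℂ × Matrix (Fin d) (Fin d) ℂ =>
          (Ω * (p.1 - p.2)).trace.re) ''
        {p | IsDensity p.1 ∧ P * p.1 = p.1 ∧ IsDensity p.2 ∧ (p.2 * P).trace.re ≤ 1 - ε}))
    '' Mset)

/-- The ε-visibility in its minimax (minimum) form. -/
noncomputable def gammaMin (Mset : Set (Matrix (Fin d) (Fin d) ℂ))
    (P : Matrix (Fin d) (Fin d) ℂ) (ε : ℝ) : ℝ :=
  sInf ((fun p : Matrix (Fin d) (Fin d) ℂ × Matrix (Fin d) (Fin d) ℂ =>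
      (1 / (2 * ε)) * Mnorm Mset (p.1 - p.2)) ''
    {p | IsDensity p.1 ∧ P * p.1 = p.1 ∧ IsDensity p.2 ∧ (p.2 * P).trace.re ≤ 1 - ε})

/-- μ_{ρ,M}(1), defined through perfectly distinguishable (orthogonal) counterparts. -/
noncomputable def muone (Mset : Set (Matrix (Fin d) (Fin d) ℂ))
    (ρ : Matrix (Fin d) (Fin d) ℂ) : ℝ :=
  (1 / 2) * sInf ((fun σ => Mnorm Mset (ρ - σ)) '' {σ | IsDensity σ ∧ (ρ * σ).trace = 0})

/-- The distinguishability ratio μ̂_{ρ,M}. -/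
noncomputable def muhat (Mset : Set (Matrix (Fin d) (Fin d) ℂ))
    (ρ : Matrix (Fin d) (Fin d) ℂ) : ℝ :=
  sInf ((fun σ => Mnorm Mset (ρ - σ) / trNorm (ρ - σ)) '' {σ | IsDensity σ ∧ σ ≠ ρ})

open scoped MatrixOrder

lemma trNorm_eq_sqrt (A : Matrix (Fin d) (Fin d) ℂ) :
    trNorm A = (CFC.sqrt (Aᴴ * A)).trace.re := by
  have h0 : 0 ≤ Aᴴ * A := (Matrix.posSemidef_conjTranspose_mul_self A).nonneg
  rw [CFC.sqrt_eq_real_sqrt (Aᴴ * A) h0, cfcₙ_eq_cfc,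
    (Matrix.posSemidef_conjTranspose_mul_self A).isHermitian.cfc_eq, IsHermitian.cfc,
    Unitary.conjStarAlgAut_apply, trNorm]
  rfl

lemma diag_nonneg {A : Matrix (Fin d) (Fin d) ℂ} (hA : A.PosSemidef) (i : Fin d) :
    0 ≤ A i i := by
  have := hA.dotProduct_mulVec_nonneg (Pi.single i 1)
  simpa [dotProduct, Pi.single_apply, Finset.sum_ite_eq'] using this

lemma trace_eq_re {A : Matrix (Fin d) (Fin d) ℂ} (hA : A.IsHermitian) :
    A.trace = (A.trace.re : ℂ) := by
  have h : star A.trace = A.trace := by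
    conv_lhs => rw [← trace_conjTranspose, hA.eq]
  exact ((Complex.conj_eq_iff_re).mp h).symm

lemma trace_nonneg' {A : Matrix (Fin d) (Fin d) ℂ} (hA : A.PosSemidef) :
    0 ≤ A.trace := by
  rw [Matrix.trace]
  exact Finset.sum_nonneg fun i _ => diag_nonneg hA i

lemma trace_re_nonneg {A : Matrix (Fin d) (Fin d) ℂ} (hA : A.PosSemidef) :
    0 ≤ A.trace.re :=
  (Complex.le_def.mp (trace_nonneg' hA)).1

lemma eq_zero_of_posSemidef_trace_eq_zero {A : Matrix (Fin d) (Fin d) ℂ}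
    (hA : A.PosSemidef) (h : A.trace = 0) : A = 0 := by
  have hs := CFC.sqrt_mul_sqrt_self A hA.nonneg
  have hherm : (CFC.sqrt A)ᴴ = CFC.sqrt A := (CFC.sqrt_nonneg A).posSemidef.1
  have ht : ((CFC.sqrt A)ᴴ * (CFC.sqrt A)).trace = 0 := by rw [hherm, hs, h]
  have hz : (CFC.sqrt A) = 0 := by
    have hsum : ∑ i, ∑ j, star ((CFC.sqrt A) j i) * (CFC.sqrt A) j i = 0 := by
      rw [← ht, Matrix.trace]
      simp only [Matrix.diag, Matrix.mul_apply, Matrix.conjTranspose_apply]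
    have hterm : ∀ i ∈ Finset.univ, (0:ℂ) ≤ ∑ j, star ((CFC.sqrt A) j i) * (CFC.sqrt A) j i :=
      fun i _ => Finset.sum_nonneg fun j _ => star_mul_self_nonneg _
    have := (Finset.sum_eq_zero_iff_of_nonneg hterm).mp hsum
    ext j i
    have hi := (Finset.sum_eq_zero_iff_of_nonneg
      (fun j _ => star_mul_self_nonneg ((CFC.sqrt A) j i))).mp (this i (Finset.mem_univ i))
    have := hi j (Finset.mem_univ j)
    have h2 : (CFC.sqrt A) j i * star ((CFC.sqrt A) j i) = 0 := by rw [mul_comm]; exact this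
    rw [Complex.star_def, Complex.mul_conj] at h2
    exact_mod_cast Complex.normSq_eq_zero.mp (by exact_mod_cast h2)
  rw [← hs, hz, mul_zero]

lemma trace_re_pos {A : Matrix (Fin d) (Fin d) ℂ} (hA : A.PosSemidef) (hne : A ≠ 0) :
    0 < A.trace.re := by
  rcases lt_or_eq_of_le (trace_re_nonneg hA) with h | h
  · exact h
  · exfalso
    apply hne
    apply eq_zero_of_posSemidef_trace_eq_zero hA
    rw [trace_eq_re hA.1, ← h, Complex.ofReal_zero]

lemma mul_eq_zero_of_trace_mul_eq_zero {ρ σ : Matrix (Fin d) (Fin d) ℂ}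
    (hρ : ρ.PosSemidef) (hσ : σ.PosSemidef) (h : (ρ * σ).trace = 0) : ρ * σ = 0 := by
  set B := CFC.sqrt ρ with hBdef
  set Cm := CFC.sqrt σ with hCdef
  have hB : Bᴴ = B := (CFC.sqrt_nonneg ρ).posSemidef.1
  have hC : Cmᴴ = Cm := (CFC.sqrt_nonneg σ).posSemidef.1
  have hBB : B * B = ρ := CFC.sqrt_mul_sqrt_self ρ hρ.nonneg
  have hCC : Cm * Cm = σ := CFC.sqrt_mul_sqrt_self σ hσ.nonneg
  have key : ((B * Cm)ᴴ * (B * Cm)).trace = 0 := by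
    have : (B * Cm)ᴴ * (B * Cm) = Cm * ρ * Cm := by
      rw [conjTranspose_mul, hB, hC, ← hBB]; noncomm_ring
    rw [this, mul_assoc, trace_mul_comm, mul_assoc, hCC, h]
  have hzero : B * Cm = 0 := by
    have hpsd := Matrix.posSemidef_conjTranspose_mul_self (B * Cm)
    have := eq_zero_of_posSemidef_trace_eq_zero hpsd key
    exact Matrix.conjTranspose_mul_self_eq_zero.mp this
  calc ρ * σ = B * (B * Cm) * Cm := by rw [← hBB, ← hCC]; noncomm_ring
  _ = 0 := by rw [hzero, mul_zero, zero_mul]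


lemma trNorm_nonneg (A : Matrix (Fin d) (Fin d) ℂ) : 0 ≤ trNorm A := by
  rw [trNorm_eq_sqrt]
  exact trace_re_nonneg (CFC.sqrt_nonneg (Aᴴ * A)).posSemidef

lemma trNorm_sub_of_orthog {ρ σ : Matrix (Fin d) (Fin d) ℂ}
    (hρ : ρ.PosSemidef) (hσ : σ.PosSemidef) (h : ρ * σ = 0) :
    trNorm (ρ - σ) = (ρ.trace + σ.trace).re := by
  have hσρ : σ * ρ = 0 := by
    have := congrArg conjTranspose h
    rwa [conjTranspose_mul, hρ.1.eq, hσ.1.eq, conjTranspose_zero] at this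
  have hsq : (ρ + σ) ^ 2 = (ρ - σ)ᴴ * (ρ - σ) := by
    rw [conjTranspose_sub, hρ.1.eq, hσ.1.eq, pow_two]
    rw [mul_sub, sub_mul, sub_mul, add_mul, mul_add, mul_add, h, hσρ]
    noncomm_ring
  have := CFC.sqrt_sq (ρ + σ) (hρ.add hσ).nonneg
  rw [hsq] at this
  rw [trNorm_eq_sqrt, this, trace_add]


lemma Mnorm_nonneg {Mset : Set (Matrix (Fin d) (Fin d) ℂ)} (h0 : (0:Matrix (Fin d) (Fin d) ℂ) ∈ Mset)
    {Δ : Matrix (Fin d) (Fin d) ℂ} (hΔ : Δ.trace = 0) : 0 ≤ Mnorm Mset Δ := by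
  have hmem : (0:ℝ) ∈ (fun M => 2 * (M * Δ).trace.re - Δ.trace.re) '' Mset :=
    ⟨0, h0, by simp [hΔ]⟩
  by_cases hb : BddAbove ((fun M => 2 * (M * Δ).trace.re - Δ.trace.re) '' Mset)
  · exact le_csSup hb hmem
  · rw [Mnorm, Real.sSup_of_not_bddAbove hb]

lemma Mnorm_neg {Mset : Set (Matrix (Fin d) (Fin d) ℂ)}
    (hsym : ∀ M ∈ Mset, 1 - M ∈ Mset)
    {Δ : Matrix (Fin d) (Fin d) ℂ} (hΔ : Δ.trace = 0) :
    Mnorm Mset (-Δ) = Mnorm Mset Δ := by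
  have key : ∀ M, (2 * (M * -Δ).trace.re - (-Δ).trace.re)
      = 2 * ((1 - M) * Δ).trace.re - Δ.trace.re := by
    intro M
    simp [mul_neg, trace_neg, sub_mul, trace_sub, hΔ, Complex.sub_re]
  rw [Mnorm, Mnorm]
  congr 1
  ext x
  constructor
  · rintro ⟨M, hM, rfl⟩
    exact ⟨1 - M, hsym M hM, (key M).symm⟩
  · rintro ⟨M, hM, rfl⟩
    refine ⟨1 - M, hsym M hM, ?_⟩
    show 2 * ((1 - M) * -Δ).trace.re - (-Δ).trace.re = 2 * (M * Δ).trace.re - Δ.trace.re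
    rw [key (1 - M)]
    simp

lemma Mnorm_smul (Mset : Set (Matrix (Fin d) (Fin d) ℂ))
    {Δ : Matrix (Fin d) (Fin d) ℂ} {c : ℝ} (hc : 0 ≤ c) :
    Mnorm Mset ((c:ℂ) • Δ) = c * Mnorm Mset Δ := by
  have key : (fun M => 2 * ((M * ((c:ℂ) • Δ)).trace).re - ((c:ℂ) • Δ).trace.re)
      = (fun x => c * x) ∘ (fun M => 2 * (M * Δ).trace.re - Δ.trace.re) := by
    funext M
    simp only [Function.comp_apply, mul_smul_comm, trace_smul, smul_eq_mul,
      Complex.re_ofReal_mul]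
    ring
  rw [Mnorm, Mnorm, key, Set.image_comp]
  rw [show ((fun x => c * x) '' ((fun M => 2 * (M * Δ).trace.re - Δ.trace.re) '' Mset))
      = c • ((fun M => 2 * (M * Δ).trace.re - Δ.trace.re) '' Mset) from by
    ext x; simp [Set.mem_smul_set, smul_eq_mul]]
  rw [Real.sSup_smul_of_nonneg hc, smul_eq_mul]


lemma posSemidef_real_smul {A : Matrix (Fin d) (Fin d) ℂ} (hA : A.PosSemidef)
    {c : ℝ} (hc : 0 ≤ c) : ((c:ℂ) • A).PosSemidef := by
  refine PosSemidef.of_dotProduct_mulVec_nonneg ?_ ?_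
  · rw [IsHermitian, conjTranspose_smul, hA.1.eq]
    congr 1
    simp
  · intro x
    rw [smul_mulVec, dotProduct_smul, smul_eq_mul]
    exact mul_nonneg (by exact_mod_cast Complex.zero_le_real.mpr hc) (hA.dotProduct_mulVec_nonneg x)

lemma rank_smul_eq {A : Matrix (Fin d) (Fin d) ℂ} {c : ℂ} (hc : c ≠ 0) :
    ((c • A)).rank = A.rank := by
  have h : LinearMap.range (c • A).mulVecLin = LinearMap.range A.mulVecLin := by
    ext v
    simp only [LinearMap.mem_range, mulVecLin_apply]
    constructor
    · rintro ⟨u, rfl⟩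
      exact ⟨c • u, by rw [smul_mulVec, mulVec_smul]⟩
    · rintro ⟨u, rfl⟩
      exact ⟨c⁻¹ • u, by rw [smul_mulVec, mulVec_smul, smul_smul,
        mul_inv_cancel₀ hc, one_smul]⟩
  rw [Matrix.rank, Matrix.rank, h]

lemma mulVecLin_eq_zero_iff {A : Matrix (Fin d) (Fin d) ℂ} :
    A.mulVecLin = 0 ↔ A = 0 := by
  constructor
  · intro h
    ext i j
    have := congrFun (congrArg DFunLike.coe h) (Pi.single j 1)
    simp only [mulVecLin_apply, LinearMap.zero_apply] at this
    have h2 := congrFun this i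
    rw [Matrix.mulVec_single] at h2
    simpa using h2
  · rintro rfl; simp

lemma rank_pos_of_ne_zero {A : Matrix (Fin d) (Fin d) ℂ} (hA : A ≠ 0) : 1 ≤ A.rank := by
  rw [Nat.one_le_iff_ne_zero]
  intro h
  apply hA
  rw [Matrix.rank] at h
  have : LinearMap.range A.mulVecLin = ⊥ := Submodule.finrank_eq_zero.mp h
  rw [← mulVecLin_eq_zero_iff, ← LinearMap.range_eq_bot]
  exact this

lemma exists_kernel_vec {A : Matrix (Fin d) (Fin d) ℂ} (h : A.rank < d) :
    ∃ v : Fin d → ℂ, v ≠ 0 ∧ A *ᵥ v = 0 := by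
  have hrn := LinearMap.finrank_range_add_finrank_ker A.mulVecLin
  rw [show Module.finrank ℂ (Fin d → ℂ) = d from by simp] at hrn
  rw [show Module.finrank ℂ (LinearMap.range A.mulVecLin) = A.rank from rfl] at hrn
  have hker : 0 < Module.finrank ℂ (LinearMap.ker A.mulVecLin) := by omega
  obtain ⟨⟨v, hv⟩, hne⟩ := Module.finrank_pos_iff_exists_ne_zero.mp hker
  refine ⟨v, ?_, hv⟩
  intro h0
  apply hne
  ext
  simp [h0]


lemma vecMulVec_mulVec (v w x : Fin d → ℂ) :
    (vecMulVec v w) *ᵥ x = (w ⬝ᵥ x) • v := by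
  ext i
  simp [vecMulVec_apply, mulVec, dotProduct, Finset.mul_sum, mul_assoc, Finset.sum_mul, mul_comm,
    mul_left_comm]

lemma posSemidef_vecMulVec (v : Fin d → ℂ) : (vecMulVec v (star v)).PosSemidef := by
  refine PosSemidef.of_dotProduct_mulVec_nonneg ?_ ?_
  · ext i j
    simp [vecMulVec_apply, conjTranspose_apply, mul_comm]
  · intro x
    rw [vecMulVec_mulVec, dotProduct_smul, smul_eq_mul]
    have hsx : star x ⬝ᵥ v = star (star v ⬝ᵥ x) := by
      rw [← star_dotProduct_star, star_star]
    rw [hsx, mul_comm]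
    exact star_mul_self_nonneg _

lemma trace_vecMulVec (v : Fin d → ℂ) :
    (vecMulVec v (star v)).trace = ((∑ i, Complex.normSq (v i) : ℝ) : ℂ) := by
  rw [Matrix.trace]
  push_cast
  congr 1
  funext i
  simp [vecMulVec_apply, Matrix.diag]
  rw [Complex.mul_conj]

/-- Existence of an orthogonal density for a non-full-rank density. -/
lemma exists_orthogonal_density {ρ : Matrix (Fin d) (Fin d) ℂ}
    (hρ : ρ.PosSemidef) (h : ρ.rank < d) :
    ∃ σ : Matrix (Fin d) (Fin d) ℂ, IsDensity σ ∧ ρ * σ = 0 := by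
  obtain ⟨v, hv, hker⟩ := exists_kernel_vec h
  set c : ℝ := ∑ i, Complex.normSq (v i) with hc
  have hcpos : 0 < c := by
    rw [hc]
    apply Finset.sum_pos'
    · exact fun i _ => Complex.normSq_nonneg _
    · obtain ⟨i, hi⟩ := Function.ne_iff.mp hv
      exact ⟨i, Finset.mem_univ i, Complex.normSq_pos.mpr hi⟩
  refine ⟨((c⁻¹ : ℝ) : ℂ) • vecMulVec v (star v), ⟨⟨posSemidef_real_smul (posSemidef_vecMulVec v)
    (by positivity), ?_⟩, ?_⟩⟩
  · rw [trace_smul, trace_vecMulVec, smul_eq_mul, ← hc, ← Complex.ofReal_mul,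
      inv_mul_cancel₀ (ne_of_gt hcpos), Complex.ofReal_one]
  · rw [mul_smul_comm]
    have : ρ * vecMulVec v (star v) = 0 := by
      ext i j
      simp only [Matrix.mul_apply, vecMulVec_apply, Matrix.zero_apply]
      calc ∑ k, ρ i k * (v k * star (v j))
          = (∑ k, ρ i k * v k) * star (v j) := by rw [Finset.sum_mul]; congr 1; funext k; ring
        _ = 0 := by
            have : ρ *ᵥ v = 0 := hker
            have := congrFun this i
            simp only [mulVec, dotProduct] at this
            rw [show (0:Fin d → ℂ) i = 0 from rfl] at this
            rw [this, zero_mul]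
    rw [this, smul_zero]


/-- Jordan decomposition of a Hermitian matrix. -/
lemma jordan {Δ : Matrix (Fin d) (Fin d) ℂ} (hΔ : Δ.IsHermitian) :
    ∃ P N : Matrix (Fin d) (Fin d) ℂ,
      P.PosSemidef ∧ N.PosSemidef ∧ Δ = P - N ∧ P * N = 0 ∧ N * P = 0 := by
  set V : Matrix (Fin d) (Fin d) ℂ := (hΔ.eigenvectorUnitary : Matrix (Fin d) (Fin d) ℂ) with hV
  set lam := hΔ.eigenvalues with hlam
  have hVV : star V * V = 1 := Matrix.mem_unitaryGroup_iff'.mp hΔ.eigenvectorUnitary.2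
  set Dp : Matrix (Fin d) (Fin d) ℂ := diagonal (fun i => ((max (lam i) 0 : ℝ) : ℂ)) with hDp
  set Dn : Matrix (Fin d) (Fin d) ℂ := diagonal (fun i => ((max (-lam i) 0 : ℝ) : ℂ)) with hDn
  have hDpPsd : Dp.PosSemidef := posSemidef_diagonal_iff.mpr fun i =>
    Complex.zero_le_real.mpr (le_max_right _ _)
  have hDnPsd : Dn.PosSemidef := posSemidef_diagonal_iff.mpr fun i =>
    Complex.zero_le_real.mpr (le_max_right _ _)
  refine ⟨V * Dp * star V, V * Dn * star V, ?_, ?_, ?_, ?_, ?_⟩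
  · simpa [Matrix.star_eq_conjTranspose] using hDpPsd.mul_mul_conjTranspose_same V
  · simpa [Matrix.star_eq_conjTranspose] using hDnPsd.mul_mul_conjTranspose_same V
  · have hfun : (fun i => ((max (lam i) 0:ℝ):ℂ) - ((max (-lam i) 0:ℝ):ℂ))
        = (RCLike.ofReal ∘ lam) := by
      funext i
      show ((max (lam i) 0:ℝ):ℂ) - ((max (-lam i) 0:ℝ):ℂ) = ((lam i : ℝ) : ℂ)
      rw [← Complex.ofReal_sub]
      exact congrArg _ (max_zero_sub_max_neg_zero_eq_self _)
    have : Dp - Dn = diagonal (RCLike.ofReal ∘ lam) := by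
      rw [hDp, hDn, diagonal_sub, hfun]
    calc Δ = V * diagonal (RCLike.ofReal ∘ lam) * star V := hΔ.spectral_theorem
    _ = V * Dp * star V - V * Dn * star V := by rw [← this]; noncomm_ring
  · calc V * Dp * star V * (V * Dn * star V) = V * (Dp * (star V * V) * Dn) * star V := by
          noncomm_ring
    _ = 0 := by
        rw [hVV, mul_one, hDp, hDn, diagonal_mul_diagonal]
        have : (fun i => ((max (lam i) 0 : ℝ) : ℂ) * ((max (-lam i) 0 : ℝ) : ℂ)) = fun _ => 0 := by
          funext i
          rcases le_total (lam i) 0 with h | h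
          · rw [max_eq_right h, Complex.ofReal_zero, zero_mul]
          · rw [max_eq_right (by linarith : -lam i ≤ 0), Complex.ofReal_zero, mul_zero]
        rw [this, diagonal_zero, mul_zero, zero_mul]
  · calc V * Dn * star V * (V * Dp * star V) = V * (Dn * (star V * V) * Dp) * star V := by
          noncomm_ring
    _ = 0 := by
        rw [hVV, mul_one, hDp, hDn, diagonal_mul_diagonal]
        have : (fun i => ((max (-lam i) 0 : ℝ) : ℂ) * ((max (lam i) 0 : ℝ) : ℂ)) = fun _ => 0 := by
          funext i
          rcases le_total (lam i) 0 with h | h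
          · rw [max_eq_right h, Complex.ofReal_zero, mul_zero]
          · rw [max_eq_right (by linarith : -lam i ≤ 0), Complex.ofReal_zero, zero_mul]
        rw [this, diagonal_zero, mul_zero, zero_mul]

/-- the positive part of `ρ - σ` has rank at most the rank of `ρ`. -/
lemma rank_pos_part_le {ρ σ P N : Matrix (Fin d) (Fin d) ℂ}
    (hρ : ρ.PosSemidef) (hσ : σ.PosSemidef) (hP : P.PosSemidef) (hN : N.PosSemidef)
    (hdiff : ρ - σ = P - N) (hNP : N * P = 0) : P.rank ≤ ρ.rank := by
  classical
  set R := LinearMap.range P.mulVecLin with hR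
  set K := LinearMap.ker ρ.mulVecLin with hK
  have hdisj : R ⊓ K = ⊥ := by
    rw [Submodule.eq_bot_iff]
    rintro v ⟨⟨u, rfl⟩, hvK⟩
    simp only [mulVecLin_apply] at *
    set v := P *ᵥ u with hv
    have hρv : ρ *ᵥ v = 0 := hvK
    have hNv : N *ᵥ v = 0 := by
      rw [hv, mulVec_mulVec, hNP, zero_mulVec]
    have hle : star v ⬝ᵥ P *ᵥ v ≤ 0 := by
      have h1 : star v ⬝ᵥ (ρ - σ) *ᵥ v = star v ⬝ᵥ P *ᵥ v := by
        rw [hdiff, sub_mulVec, dotProduct_sub, hNv, dotProduct_zero, sub_zero]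
      have h2 : star v ⬝ᵥ (ρ - σ) *ᵥ v = - (star v ⬝ᵥ σ *ᵥ v) := by
        rw [sub_mulVec, dotProduct_sub, hρv, dotProduct_zero, zero_sub]
      rw [← h1, h2, neg_nonpos]
      exact hσ.dotProduct_mulVec_nonneg v
    have hzero : star v ⬝ᵥ P *ᵥ v = 0 := le_antisymm hle (hP.dotProduct_mulVec_nonneg v)
    have hPv : P *ᵥ v = 0 := (hP.dotProduct_mulVec_zero_iff v).mp hzero
    have : star v ⬝ᵥ v = 0 := by
      show star (P *ᵥ u) ⬝ᵥ (P *ᵥ u) = 0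
      rw [star_mulVec, ← dotProduct_mulVec, hP.1.eq,
        (show (P *ᵥ (P *ᵥ u)) = 0 from hPv), dotProduct_zero]
    exact dotProduct_star_self_eq_zero.mp this
  have hsum := Submodule.finrank_sup_add_finrank_inf_eq R K
  rw [hdisj, finrank_bot] at hsum
  have hle : Module.finrank ℂ R + Module.finrank ℂ K ≤ d := by
    rw [← hsum]
    simpa using (Submodule.finrank_le (R ⊔ K)).trans_eq (by simp)
  have hrn := LinearMap.finrank_range_add_finrank_ker ρ.mulVecLin
  rw [show Module.finrank ℂ (Fin d → ℂ) = d from by simp, ← hK] at hrn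
  have hP1 : Matrix.rank P = Module.finrank ℂ R := rfl
  have hρ1 : Matrix.rank ρ = Module.finrank ℂ (LinearMap.range ρ.mulVecLin) := rfl
  omega


-- basis density matrices
lemma basis_density (j : Fin d) :
    (diagonal (fun i => if i = j then (1:ℂ) else 0)).PosSemidef ∧
    (diagonal (fun i => if i = j then (1:ℂ) else 0)).trace = 1 ∧
    (diagonal (fun i => if i = j then (1:ℂ) else 0)).rank = 1 := by
  refine ⟨posSemidef_diagonal_iff.mpr fun i => by positivity, ?_, ?_⟩
  · rw [trace_diagonal]
    simp
  · rw [rank_diagonal]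
    rw [Fintype.card_congr (Equiv.subtypeEquivRight (q := fun i => i = j) fun i => by
      by_cases h : i = j <;> simp [h])]
    simp


lemma trace_sub_density {ρ σ : Matrix (Fin d) (Fin d) ℂ} (hρ : IsDensity ρ) (hσ : IsDensity σ) :
    (ρ - σ).trace = 0 := by
  rw [trace_sub, hρ.2, hσ.2, sub_self]

lemma muone_nonneg {Mset : Set (Matrix (Fin d) (Fin d) ℂ)}
    (h0 : (0 : Matrix (Fin d) (Fin d) ℂ) ∈ Mset) {ρ : Matrix (Fin d) (Fin d) ℂ}
    (hρ : IsDensity ρ) : 0 ≤ muone Mset ρ := by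
  rw [muone]
  apply mul_nonneg (by norm_num)
  apply Real.sInf_nonneg
  rintro x ⟨σ, ⟨hσ, _⟩, rfl⟩
  exact Mnorm_nonneg h0 (trace_sub_density hρ hσ)

lemma muone_le {Mset : Set (Matrix (Fin d) (Fin d) ℂ)}
    (h0 : (0 : Matrix (Fin d) (Fin d) ℂ) ∈ Mset) {ρ σ : Matrix (Fin d) (Fin d) ℂ}
    (hρ : IsDensity ρ) (hσ : IsDensity σ) (horth : (ρ * σ).trace = 0) :
    muone Mset ρ ≤ (1/2) * Mnorm Mset (ρ - σ) := by
  rw [muone]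
  have hb : BddBelow ((fun σ => Mnorm Mset (ρ - σ)) '' {σ | IsDensity σ ∧ (ρ * σ).trace = 0}) := by
    refine ⟨0, ?_⟩
    rintro x ⟨τ, ⟨hτ, _⟩, rfl⟩
    exact Mnorm_nonneg h0 (trace_sub_density hρ hτ)
  have hmem : Mnorm Mset (ρ - σ) ∈
      (fun σ => Mnorm Mset (ρ - σ)) '' {σ | IsDensity σ ∧ (ρ * σ).trace = 0} :=
    ⟨σ, ⟨hσ, horth⟩, rfl⟩
  have := csInf_le hb hmem
  linarith

lemma muhat_nonneg {Mset : Set (Matrix (Fin d) (Fin d) ℂ)}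
    (h0 : (0 : Matrix (Fin d) (Fin d) ℂ) ∈ Mset) {ρ : Matrix (Fin d) (Fin d) ℂ}
    (hρ : IsDensity ρ) : 0 ≤ muhat Mset ρ := by
  rw [muhat]
  apply Real.sInf_nonneg
  rintro x ⟨σ, ⟨hσ, _⟩, rfl⟩
  exact div_nonneg (Mnorm_nonneg h0 (trace_sub_density hρ hσ)) (trNorm_nonneg _)

lemma density_ne_zero {ρ : Matrix (Fin d) (Fin d) ℂ} (hρ : IsDensity ρ) : ρ ≠ 0 := by
  intro h
  have := hρ.2
  rw [h, trace_zero] at this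
  exact one_ne_zero this.symm

lemma density_rank_pos {ρ : Matrix (Fin d) (Fin d) ℂ} (hρ : IsDensity ρ) : 1 ≤ ρ.rank :=
  rank_pos_of_ne_zero (density_ne_zero hρ)

/-- For a density with an orthogonal counterpart, `muhat ≤ muone`. -/
lemma muhat_le_muone {Mset : Set (Matrix (Fin d) (Fin d) ℂ)} (hM : IsMClass Mset)
    {ρ : Matrix (Fin d) (Fin d) ℂ} (hρ : IsDensity ρ) (hrank : ρ.rank < d) :
    muhat Mset ρ ≤ muone Mset ρ := by
  obtain ⟨h0, _, _, hsym⟩ := hM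
  obtain ⟨σ₀, hσ₀, hσ₀orth⟩ := exists_orthogonal_density hρ.1 hrank
  rw [muone]
  have hne : ((fun σ => Mnorm Mset (ρ - σ)) ''
      {σ | IsDensity σ ∧ (ρ * σ).trace = 0}).Nonempty :=
    ⟨_, ⟨σ₀, ⟨hσ₀, by rw [hσ₀orth, trace_zero]⟩, rfl⟩⟩
  have hstep : ∀ x ∈ (fun σ => Mnorm Mset (ρ - σ)) '' {σ | IsDensity σ ∧ (ρ * σ).trace = 0},
      2 * muhat Mset ρ ≤ x := by
    rintro x ⟨σ, ⟨hσ, horth⟩, rfl⟩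
    have hmulz : ρ * σ = 0 := mul_eq_zero_of_trace_mul_eq_zero hρ.1 hσ.1 horth
    have hσneρ : σ ≠ ρ := by
      intro heq
      rw [heq] at horth
      have : ρ = 0 := by
        have h2 : (ρᴴ * ρ).trace = 0 := by rw [hρ.1.1.eq]; exact horth
        have := eq_zero_of_posSemidef_trace_eq_zero (posSemidef_conjTranspose_mul_self ρ) h2
        exact conjTranspose_mul_self_eq_zero.mp this
      exact density_ne_zero hρ this
    have htr : trNorm (ρ - σ) = 2 := by
      rw [trNorm_sub_of_orthog hρ.1 hσ.1 hmulz, hρ.2, hσ.2]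
      norm_num
    have hmem : Mnorm Mset (ρ - σ) / trNorm (ρ - σ) ∈
        (fun σ => Mnorm Mset (ρ - σ) / trNorm (ρ - σ)) '' {σ | IsDensity σ ∧ σ ≠ ρ} :=
      ⟨σ, ⟨hσ, hσneρ⟩, rfl⟩
    have hb : BddBelow ((fun σ => Mnorm Mset (ρ - σ) / trNorm (ρ - σ)) ''
        {σ | IsDensity σ ∧ σ ≠ ρ}) := by
      refine ⟨0, ?_⟩
      rintro y ⟨τ, ⟨hτ, _⟩, rfl⟩
      exact div_nonneg (Mnorm_nonneg h0 (trace_sub_density hρ hτ)) (trNorm_nonneg _)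
    have := csInf_le hb hmem
    rw [muhat]
    rw [htr] at this
    linarith
  have h2 : 2 * muhat Mset ρ ≤
      sInf ((fun σ => Mnorm Mset (ρ - σ)) '' {σ | IsDensity σ ∧ (ρ * σ).trace = 0}) :=
    le_csInf hne hstep
  linarith

/-- Theorem 2, second part: for r ≤ dim H, the minima of μ_{ρ,M}(1)
over rank ≤ min{r, dim H / 2}, of μ_{ρ,M}(1) over rank ≤ r, and of μ̂_{ρ,M}
over rank ≤ r, all coincide. -/
theorem rank_restricted_minima (Mset : Set (Matrix (Fin d) (Fin d) ℂ)) (hM : IsMClass Mset)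
    (r : ℕ) (hr : r ≤ d) :
    sInf ((fun ρ => muone Mset ρ) ''
        {ρ | IsDensity ρ ∧ (ρ.rank : ℝ) ≤ min (r : ℝ) ((d : ℝ) / 2)}) =
      sInf ((fun ρ => muone Mset ρ) '' {ρ | IsDensity ρ ∧ ρ.rank ≤ r ∧ ρ.rank < d}) ∧
    sInf ((fun ρ => muone Mset ρ) '' {ρ | IsDensity ρ ∧ ρ.rank ≤ r ∧ ρ.rank < d}) =
      sInf ((fun ρ => muhat Mset ρ) '' {ρ | IsDensity ρ ∧ ρ.rank ≤ r}) := by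
  have h0 : (0 : Matrix (Fin d) (Fin d) ℂ) ∈ Mset := hM.1
  have hsym : ∀ M ∈ Mset, 1 - M ∈ Mset := hM.2.2.2
  set SA := (fun ρ => muone Mset ρ) ''
      {ρ | IsDensity ρ ∧ (ρ.rank : ℝ) ≤ min (r : ℝ) ((d : ℝ) / 2)} with hSA
  set SB := (fun ρ => muone Mset ρ) '' {ρ | IsDensity ρ ∧ ρ.rank ≤ r ∧ ρ.rank < d} with hSB
  set SC := (fun ρ => muhat Mset ρ) '' {ρ | IsDensity ρ ∧ ρ.rank ≤ r} with hSC
  have bddA : BddBelow SA := by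
    refine ⟨0, ?_⟩
    rintro x ⟨ρ, ⟨hρ, _⟩, rfl⟩
    exact muone_nonneg h0 hρ
  have bddB : BddBelow SB := by
    refine ⟨0, ?_⟩
    rintro x ⟨ρ, ⟨hρ, _⟩, rfl⟩
    exact muone_nonneg h0 hρ
  have bddC : BddBelow SC := by
    refine ⟨0, ?_⟩
    rintro x ⟨ρ, ⟨hρ, _⟩, rfl⟩
    exact muhat_nonneg h0 hρ
  by_cases hr0 : r = 0
  · -- all domains are empty
    subst hr0
    have hSAe : SA = ∅ := by
      rw [hSA, Set.eq_empty_iff_forall_notMem]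
      rintro x ⟨ρ, ⟨hρ, hrank⟩, rfl⟩
      have h1 : (1:ℝ) ≤ (ρ.rank : ℝ) := by exact_mod_cast density_rank_pos hρ
      have h2 : (ρ.rank : ℝ) ≤ 0 := hrank.trans ((min_le_left _ _).trans (by norm_num))
      linarith
    have hSBe : SB = ∅ := by
      rw [hSB, Set.eq_empty_iff_forall_notMem]
      rintro x ⟨ρ, ⟨hρ, hrank, _⟩, rfl⟩
      have h1 := density_rank_pos hρ
      omega
    have hSCe : SC = ∅ := by
      rw [hSC, Set.eq_empty_iff_forall_notMem]
      rintro x ⟨ρ, ⟨hρ, hrank⟩, rfl⟩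
      have h1 := density_rank_pos hρ
      omega
    rw [hSAe, hSBe, hSCe]
    exact ⟨rfl, rfl⟩
  have hr1 : 1 ≤ r := Nat.one_le_iff_ne_zero.mpr hr0
  by_cases hd1 : d ≤ 1
  · -- here d = 1, r = 1
    have hd : d = 1 := le_antisymm hd1 (hr1.trans hr)
    subst hd
    have hrr : r = 1 := le_antisymm hr hr1
    subst hrr
    have huniq : ∀ ρ σ : Matrix (Fin 1) (Fin 1) ℂ, IsDensity ρ → IsDensity σ → σ = ρ := by
      intro ρ σ hρ hσ
      ext i j
      have hi : i = 0 := Subsingleton.elim _ _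
      have hj : j = 0 := Subsingleton.elim _ _
      subst hi; subst hj
      have h1 : ρ.trace = ρ 0 0 := by
        rw [Matrix.trace]
        simp [Matrix.diag]
      have h2 : σ.trace = σ 0 0 := by
        rw [Matrix.trace]
        simp [Matrix.diag]
      rw [← h1, ← h2, hρ.2, hσ.2]
    have hSAe : SA = ∅ := by
      rw [hSA, Set.eq_empty_iff_forall_notMem]
      rintro x ⟨ρ, ⟨hρ, hrank⟩, rfl⟩
      have h1 : (1:ℝ) ≤ (ρ.rank : ℝ) := by exact_mod_cast density_rank_pos hρ
      have h2 : (ρ.rank : ℝ) ≤ 1/2 := hrank.trans (by norm_num)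
      linarith
    have hSBe : SB = ∅ := by
      rw [hSB, Set.eq_empty_iff_forall_notMem]
      rintro x ⟨ρ, ⟨hρ, _, hrank⟩, rfl⟩
      have h1 := density_rank_pos hρ
      omega
    have hmuhat0 : ∀ ρ : Matrix (Fin 1) (Fin 1) ℂ, IsDensity ρ → muhat Mset ρ = 0 := by
      intro ρ hρ
      rw [muhat]
      have : {σ : Matrix (Fin 1) (Fin 1) ℂ | IsDensity σ ∧ σ ≠ ρ} = ∅ := by
        rw [Set.eq_empty_iff_forall_notMem]
        rintro σ ⟨hσ, hne⟩
        exact hne (huniq ρ σ hρ hσ)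
      rw [this, Set.image_empty, Real.sInf_empty]
    have hE := basis_density (d := 1) 0
    have hEdens : IsDensity (diagonal (fun i : Fin 1 => if i = 0 then (1:ℂ) else 0)) :=
      ⟨hE.1, hE.2.1⟩
    have hSCval : sInf SC = 0 := by
      apply le_antisymm
      · apply csInf_le bddC
        rw [hSC]
        exact ⟨_, ⟨hEdens, by rw [hE.2.2]⟩, hmuhat0 _ hEdens⟩
      · apply Real.sInf_nonneg
        rintro x ⟨ρ, ⟨hρ, _⟩, rfl⟩
        exact muhat_nonneg h0 hρ
    rw [hSAe, hSBe, hSCval, Real.sInf_empty]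
    exact ⟨rfl, rfl⟩
  -- main case : 2 ≤ d, 1 ≤ r
  push_neg at hd1
  have hd2 : 2 ≤ d := hd1
  have i0 : Fin d := ⟨0, by omega⟩
  set E : Fin d → Matrix (Fin d) (Fin d) ℂ :=
    fun j => diagonal (fun i => if i = j then (1:ℂ) else 0) with hE
  have hEdens : ∀ j, IsDensity (E j) := fun j => ⟨(basis_density j).1, (basis_density j).2.1⟩
  have hErank : ∀ j, (E j).rank = 1 := fun j => (basis_density j).2.2
  have hAne : SA.Nonempty := by
    refine ⟨muone Mset (E ⟨0, by omega⟩), ⟨E ⟨0, by omega⟩, ⟨hEdens _, ?_⟩, rfl⟩⟩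
    rw [hErank]
    push_cast
    refine le_min (by exact_mod_cast hr1) ?_
    have : (2:ℝ) ≤ (d:ℝ) := by exact_mod_cast hd2
    linarith
  have hBne : SB.Nonempty :=
    ⟨muone Mset (E ⟨0, by omega⟩), ⟨E ⟨0, by omega⟩, ⟨hEdens _, by rw [hErank]; omega,
      by rw [hErank]; omega⟩, rfl⟩⟩
  have hCne : SC.Nonempty :=
    ⟨muhat Mset (E ⟨0, by omega⟩), ⟨E ⟨0, by omega⟩, ⟨hEdens _, by rw [hErank]; omega⟩, rfl⟩⟩
  -- key step for A ≤ B
  have key1 : ∀ ρ : Matrix (Fin d) (Fin d) ℂ, IsDensity ρ → ρ.rank ≤ r → ρ.rank < d →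
      sInf SA ≤ muone Mset ρ := by
    intro ρ hρ hrankr hrankd
    by_cases hhalf : (ρ.rank : ℝ) ≤ (d:ℝ)/2
    · exact csInf_le bddA ⟨ρ, ⟨hρ, le_min (by exact_mod_cast hrankr) hhalf⟩, rfl⟩
    · push_neg at hhalf
      obtain ⟨σ₀, hσ₀, hσ₀orth⟩ := exists_orthogonal_density hρ.1 hrankd
      have hfeas : ((fun σ => Mnorm Mset (ρ - σ)) ''
          {σ | IsDensity σ ∧ (ρ * σ).trace = 0}).Nonempty :=
        ⟨_, ⟨σ₀, ⟨hσ₀, by rw [hσ₀orth, trace_zero]⟩, rfl⟩⟩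
      rw [muone]
      have hstep : ∀ x ∈ (fun σ => Mnorm Mset (ρ - σ)) '' {σ | IsDensity σ ∧ (ρ * σ).trace = 0},
          2 * sInf SA ≤ x := by
        rintro x ⟨σ, ⟨hσ, horth⟩, rfl⟩
        have hmulz : ρ * σ = 0 := mul_eq_zero_of_trace_mul_eq_zero hρ.1 hσ.1 horth
        have hranks : ρ.rank + σ.rank ≤ d := by
          have := Matrix.rank_add_rank_le_card_of_mul_eq_zero hmulz
          rwa [Fintype.card_fin] at this
        have hcast : (ρ.rank : ℝ) + (σ.rank : ℝ) ≤ (d:ℝ) := by exact_mod_cast hranks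
        have hσhalf : (σ.rank : ℝ) ≤ (d:ℝ)/2 := by linarith
        have hρr : (ρ.rank : ℝ) ≤ (r:ℝ) := by exact_mod_cast hrankr
        have hσr : (σ.rank : ℝ) ≤ (r:ℝ) := by linarith
        have hmemA : muone Mset σ ∈ SA := ⟨σ, ⟨hσ, le_min hσr hσhalf⟩, rfl⟩
        have h1 : sInf SA ≤ muone Mset σ := csInf_le bddA hmemA
        have h2 : muone Mset σ ≤ (1/2) * Mnorm Mset (σ - ρ) :=
          muone_le h0 hσ hρ (by rw [trace_mul_comm]; exact horth)
        have h3 : Mnorm Mset (σ - ρ) = Mnorm Mset (ρ - σ) := by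
          rw [show σ - ρ = -(ρ - σ) from (neg_sub ρ σ).symm]
          exact Mnorm_neg hsym (trace_sub_density hρ hσ)
        rw [h3] at h2
        linarith
      have := le_csInf hfeas hstep
      linarith
  -- key step for B ≤ C
  have key2 : ∀ ρ : Matrix (Fin d) (Fin d) ℂ, IsDensity ρ → ρ.rank ≤ r →
      sInf SB ≤ muhat Mset ρ := by
    intro ρ hρ hrankr
    rw [muhat]
    have hTne : ({σ : Matrix (Fin d) (Fin d) ℂ | IsDensity σ ∧ σ ≠ ρ}).Nonempty := by
      by_cases hρE : ρ = E ⟨0, by omega⟩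
      · refine ⟨E ⟨1, by omega⟩, hEdens _, ?_⟩
        rw [hρE]
        intro hcontra
        have := congrFun (congrFun hcontra ⟨0, by omega⟩) ⟨0, by omega⟩
        rw [hE] at this
        simp only [Matrix.diagonal_apply_eq] at this
        norm_num [Fin.ext_iff] at this
      · exact ⟨E ⟨0, by omega⟩, hEdens _, fun h => hρE (h ▸ rfl)⟩
    apply le_csInf (hTne.image _)
    rintro x ⟨σ, ⟨hσ, hσne⟩, rfl⟩
    show sInf SB ≤ Mnorm Mset (ρ - σ) / trNorm (ρ - σ)
    -- Jordan decomposition of ρ - σ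
    have hΔh : (ρ - σ).IsHermitian := hρ.1.1.sub hσ.1.1
    have hΔne : ρ - σ ≠ 0 := sub_ne_zero.mpr (Ne.symm hσne)
    have hΔtr : (ρ - σ).trace = 0 := trace_sub_density hρ hσ
    obtain ⟨P, N, hP, hN, hdiff, hPN, hNP⟩ := jordan hΔh
    have hPne : P ≠ 0 := by
      rintro rfl
      rw [zero_sub] at hdiff
      have hNtr : N.trace = 0 := by
        have := congrArg trace hdiff
        rw [hΔtr, trace_neg, eq_comm, neg_eq_zero] at this
        exact this
      have hNz := eq_zero_of_posSemidef_trace_eq_zero hN hNtr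
      rw [hNz, neg_zero] at hdiff
      exact hΔne hdiff
    have hNne : N ≠ 0 := by
      rintro rfl
      rw [sub_zero] at hdiff
      have hPtr : P.trace = 0 := by rw [← hdiff]; exact hΔtr
      have hPz := eq_zero_of_posSemidef_trace_eq_zero hP hPtr
      rw [hPz] at hdiff
      exact hΔne hdiff
    set t : ℝ := P.trace.re with ht
    have htpos : 0 < t := trace_re_pos hP hPne
    have htrP : P.trace = (t:ℂ) := trace_eq_re hP.1
    have htrN : N.trace = (t:ℂ) := by
      have := congrArg trace hdiff
      rw [hΔtr, trace_sub, eq_comm, sub_eq_zero] at this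
      rw [← this, htrP]
    set c : ℂ := ((t⁻¹:ℝ):ℂ) with hc
    have hcne : c ≠ 0 := by
      rw [hc]
      exact_mod_cast inv_ne_zero (ne_of_gt htpos)
    have hρ'dens : IsDensity (c • P) := by
      refine ⟨posSemidef_real_smul hP (by positivity), ?_⟩
      rw [trace_smul, htrP, hc, smul_eq_mul, ← Complex.ofReal_mul,
        inv_mul_cancel₀ (ne_of_gt htpos), Complex.ofReal_one]
    have hσ'dens : IsDensity (c • N) := by
      refine ⟨posSemidef_real_smul hN (by positivity), ?_⟩
      rw [trace_smul, htrN, hc, smul_eq_mul, ← Complex.ofReal_mul,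
        inv_mul_cancel₀ (ne_of_gt htpos), Complex.ofReal_one]
    have horth' : ((c • P) * (c • N)).trace = 0 := by
      rw [smul_mul_assoc, mul_smul_comm, hPN]
      simp
    have hrank' : (c • P).rank = P.rank := rank_smul_eq hcne
    have hrankle : P.rank ≤ ρ.rank := rank_pos_part_le hρ.1 hσ.1 hP hN hdiff hNP
    have hrankd : P.rank < d := by
      have h1 := Matrix.rank_add_rank_le_card_of_mul_eq_zero hPN
      rw [Fintype.card_fin] at h1
      have h2 := rank_pos_of_ne_zero hNne
      omega
    have hmemB : muone Mset (c • P) ∈ SB :=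
      ⟨c • P, ⟨hρ'dens, by rw [hrank']; omega, by rw [hrank']; omega⟩, rfl⟩
    have h1 : sInf SB ≤ muone Mset (c • P) := csInf_le bddB hmemB
    have h2 : muone Mset (c • P) ≤ (1/2) * Mnorm Mset ((c • P) - (c • N)) :=
      muone_le h0 hρ'dens hσ'dens horth'
    have hsub : (c • P) - (c • N) = c • (ρ - σ) := by rw [← smul_sub, hdiff]
    have h3 : Mnorm Mset ((c • P) - (c • N)) = t⁻¹ * Mnorm Mset (ρ - σ) := by
      rw [hsub, hc]
      exact Mnorm_smul Mset (by positivity)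
    have htrNorm : trNorm (ρ - σ) = 2 * t := by
      rw [hdiff, trNorm_sub_of_orthog hP hN hPN, htrP, htrN, ← Complex.ofReal_add]
      rw [Complex.ofReal_re]
      ring
    rw [htrNorm]
    have hfinal : (1/2) * (t⁻¹ * Mnorm Mset (ρ - σ)) = Mnorm Mset (ρ - σ) / (2 * t) := by
      field_simp
    rw [h3] at h2
    linarith
  constructor
  · -- sInf SA = sInf SB
    apply le_antisymm
    · apply le_csInf hBne
      rintro x ⟨ρ, ⟨hρ, hr1', hr2'⟩, rfl⟩
      exact key1 ρ hρ hr1' hr2'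
    · apply csInf_le_csInf bddB hAne
      rintro x ⟨ρ, ⟨hρ, hmin⟩, rfl⟩
      refine ⟨ρ, ⟨hρ, ?_, ?_⟩, rfl⟩
      · exact_mod_cast hmin.trans (min_le_left _ _)
      · have h1 : (ρ.rank : ℝ) ≤ (d:ℝ)/2 := hmin.trans (min_le_right _ _)
        have h2 : (0:ℝ) < (d:ℝ) := by exact_mod_cast Nat.lt_of_lt_of_le Nat.zero_lt_two hd2
        have : (ρ.rank : ℝ) < (d:ℝ) := by linarith
        exact_mod_cast this
  · -- sInf SB = sInf SC
    apply le_antisymm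
    · apply le_csInf hCne
      rintro x ⟨ρ, ⟨hρ, hrankr⟩, rfl⟩
      exact key2 ρ hρ hrankr
    · apply le_csInf hBne
      rintro x ⟨ρ, ⟨hρ, hrankr, hrankd⟩, rfl⟩
      calc sInf SC ≤ muhat Mset ρ := csInf_le bddC ⟨ρ, ⟨hρ, hrankr⟩, rfl⟩
      _ ≤ muone Mset ρ := muhat_le_muone hM hρ hrankd

end QSVQDH
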